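/- Let n ≥ 2^128 be a natural number, set L = log₂ n, let 0 < ε < 1 be real, let μ = ε/(128·L), and define t1 = ⌊2^{10·√L}⌋, t' = ⌊2^{√L}⌋ and t2 = ⌊L/ε⌋. Let Δmax be a real number with 1 ≤ Δmax ≤ n, let h be a natural number, and let Δ_0, Δ_1, …, Δ_h be real numbers with Δ_0 = Δmax and such that for every 0 ≤ i < h we have Δ_{i+1} ≤ (1+μ)·Δ_i / t(i), where t(i) = t1 if Δmax ≥ t1·(t')^i and t(i) = t2 otherwise. If Δ_h ≥ 1, then h ≤ 4·√L. -/

import Mathlib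

open Real

private lemma two_rpow_le {a b : ℝ} (hab : a ≤ b) : (2:ℝ) ^ a ≤ 2 ^ b :=
  Real.rpow_le_rpow_of_exponent_le one_le_two hab

private lemma two_rpow_pow (a : ℝ) (m : ℕ) : ((2:ℝ) ^ a) ^ m = 2 ^ (a * m) := by
  rw [← Real.rpow_natCast ((2:ℝ) ^ a) m, ← Real.rpow_mul (by norm_num)]

private lemma two_rpow_le_iff {a b : ℝ} : (2:ℝ) ^ a ≤ 2 ^ b ↔ a ≤ b :=
  Real.rpow_le_rpow_left_iff one_lt_two

set_option maxRecDepth 8000 in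
set_option maxHeartbeats 1000000 in
/-- The hierarchy-depth bound (Lemma `hbound`): any valid degree-splitting hierarchy built
from `t1`-splitters and `t2`-splitters, in which every level's degree bound shrinks by the
stated factor and the final degree bound is at least `1`, has depth at most `4√(log₂ n)`. -/
theorem hierarchy_depth_bound (n : ℕ) (hn : 2 ^ 128 ≤ n)
    (ε : ℝ) (hε0 : 0 < ε) (hε1 : ε < 1)
    (Δmax : ℝ) (hΔ1 : 1 ≤ Δmax) (hΔn : Δmax ≤ n)
    (h : ℕ) (Δ : ℕ → ℝ)
    (hΔ0 : Δ 0 = Δmax)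
    (hrec : ∀ i < h,
      Δ (i + 1) ≤ (1 + ε / (128 * Real.logb 2 n)) * Δ i /
        (if (⌊(2 : ℝ) ^ (10 * Real.sqrt (Real.logb 2 n))⌋₊ : ℝ) *
              (⌊(2 : ℝ) ^ (Real.sqrt (Real.logb 2 n))⌋₊ : ℝ) ^ i ≤ Δmax
          then (⌊(2 : ℝ) ^ (10 * Real.sqrt (Real.logb 2 n))⌋₊ : ℝ)
          else (⌊Real.logb 2 n / ε⌋₊ : ℝ)))
    (hfin : 1 ≤ Δ h) :
    (h : ℝ) ≤ 4 * Real.sqrt (Real.logb 2 n) := by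
  classical
  have hn0 : (0:ℝ) < n := by
    have : (0:ℕ) < n := lt_of_lt_of_le (by positivity) hn
    exact_mod_cast this
  have hncast : ((2:ℝ) ^ (128:ℕ)) ≤ (n:ℝ) := by exact_mod_cast hn
  set L := Real.logb 2 n with hLdef
  have hL : (128:ℝ) ≤ L := by
    have h1 : Real.logb 2 ((2:ℝ) ^ (128:ℕ)) ≤ L :=
      Real.logb_le_logb_of_le (by norm_num) (by positivity) hncast
    rwa [Real.logb_pow, Real.logb_self_eq_one (by norm_num), mul_one] at h1
  have hL0 : (0:ℝ) < L := by linarith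
  set s := Real.sqrt L with hsdef
  have hssq : s ^ 2 = L := Real.sq_sqrt hL0.le
  have hs11 : (11:ℝ) ≤ s := by
    have h121 : (11:ℝ) = Real.sqrt 121 := by
      rw [show (121:ℝ) = 11 ^ 2 by norm_num, Real.sqrt_sq (by norm_num)]
    rw [h121, hsdef]
    exact Real.sqrt_le_sqrt (by linarith)
  have hs0 : (0:ℝ) < s := by linarith
  set T1 : ℝ := ((⌊(2 : ℝ) ^ (10 * s)⌋₊ : ℕ) : ℝ) with hT1def
  set T' : ℝ := ((⌊(2 : ℝ) ^ s⌋₊ : ℕ) : ℝ) with hT'def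
  set T2 : ℝ := ((⌊L / ε⌋₊ : ℕ) : ℝ) with hT2def
  set μ := ε / (128 * L) with hμdef
  set t : ℕ → ℝ := fun i => if T1 * T' ^ i ≤ Δmax then T1 else T2 with htdef
  have hrec' : ∀ i < h, Δ (i + 1) ≤ (1 + μ) * Δ i / t i := hrec
  -- basic bounds on T1, T', T2
  have hT1lb : (2:ℝ) ^ (10 * s - 1) ≤ T1 := by
    have hx2 : (2:ℝ) ≤ 2 ^ (10 * s) := by
      calc (2:ℝ) = 2 ^ (1:ℝ) := (Real.rpow_one 2).symm
      _ ≤ 2 ^ (10 * s) := two_rpow_le (by linarith)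
    have hfl : (2:ℝ) ^ (10 * s) - 1 < T1 := Nat.sub_one_lt_floor _
    have : (2:ℝ) ^ (10 * s - 1) = 2 ^ (10 * s) / 2 := by
      rw [Real.rpow_sub (by norm_num), Real.rpow_one]
    rw [this]
    linarith
  have hT'lb : (2:ℝ) ^ (s - 1) ≤ T' := by
    have hx2 : (2:ℝ) ≤ 2 ^ s := by
      calc (2:ℝ) = 2 ^ (1:ℝ) := (Real.rpow_one 2).symm
      _ ≤ 2 ^ s := two_rpow_le (by linarith)
    have hfl : (2:ℝ) ^ s - 1 < T' := Nat.sub_one_lt_floor _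
    have : (2:ℝ) ^ (s - 1) = 2 ^ s / 2 := by
      rw [Real.rpow_sub (by norm_num), Real.rpow_one]
    rw [this]
    linarith
  have hT1ub : T1 ≤ (2:ℝ) ^ (10 * s) := Nat.floor_le (by positivity)
  have hT'ub : T' ≤ (2:ℝ) ^ s := Nat.floor_le (by positivity)
  have h2_7 : (2:ℝ) ^ (7:ℝ) = 128 := by
    rw [show (7:ℝ) = ((7:ℕ):ℝ) by norm_num, Real.rpow_natCast]; norm_num
  have hT1_128 : (128:ℝ) ≤ T1 := by
    have : (2:ℝ) ^ (7:ℝ) ≤ 2 ^ (10 * s - 1) := two_rpow_le (by linarith)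
    rw [h2_7] at this; linarith
  have hT'_1 : (1:ℝ) ≤ T' := by
    have : (2:ℝ) ^ (0:ℝ) ≤ 2 ^ (s - 1) := two_rpow_le (by linarith)
    rw [Real.rpow_zero] at this; linarith
  have hT2_128 : (128:ℝ) ≤ T2 := by
    have hle : (128:ℝ) ≤ L / ε := by
      have h1 : L * ε ≤ L * 1 := mul_le_mul_of_nonneg_left hε1.le (by linarith)
      rw [le_div_iff₀ hε0]
      linarith
    have h2 : (128:ℕ) ≤ ⌊L / ε⌋₊ := Nat.le_floor (by exact_mod_cast hle)
    rw [hT2def]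
    exact_mod_cast h2
  have hμ0 : (0:ℝ) ≤ μ := by positivity
  have hμ1 : μ ≤ 1 := by
    rw [hμdef, div_le_one (by positivity)]; nlinarith
  have hΔub : Δmax ≤ (2:ℝ) ^ L := by
    have : (2:ℝ) ^ L = n := Real.rpow_logb (by norm_num) (by norm_num) hn0
    linarith
  have tpos : ∀ j, (0:ℝ) < t j := by
    intro j
    simp only [htdef]
    split <;> linarith
  have t128 : ∀ j, (128:ℝ) ≤ t j := by
    intro j
    simp only [htdef]
    split <;> linarith
  have teq1 : ∀ j, T1 * T' ^ j ≤ Δmax → t j = T1 := by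
    intro j hj; simp only [htdef]; rw [if_pos hj]
  have teq2 : ∀ j, ¬ (T1 * T' ^ j ≤ Δmax) → t j = T2 := by
    intro j hj; simp only [htdef]; rw [if_neg hj]
  clear_value t T2 T' T1 μ s L
  clear htdef hrec
  -- chain the recurrence
  have key : ∀ i, i ≤ h → Δ i * ∏ j ∈ Finset.range i, t j ≤ Δmax * (1 + μ) ^ i := by
    intro i
    induction i with
    | zero => intro _; simp [hΔ0]
    | succ i ih =>
      intro hi1
      have hi : i < h := hi1
      have H := hrec' i hi
      have hti := tpos i
      have hPpos : (0:ℝ) < ∏ j ∈ Finset.range i, t j :=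
        Finset.prod_pos (fun j _ => tpos j)
      rw [Finset.prod_range_succ]
      calc Δ (i + 1) * ((∏ j ∈ Finset.range i, t j) * t i)
          ≤ ((1 + μ) * Δ i / t i) * ((∏ j ∈ Finset.range i, t j) * t i) := by
            apply mul_le_mul_of_nonneg_right H (by positivity)
        _ = (1 + μ) * (Δ i * ∏ j ∈ Finset.range i, t j) := by
            field_simp
        _ ≤ (1 + μ) * (Δmax * (1 + μ) ^ i) := by
            apply mul_le_mul_of_nonneg_left (ih hi.le) (by linarith)
        _ = Δmax * (1 + μ) ^ (i + 1) := by ring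
  have hPpos : (0:ℝ) < ∏ j ∈ Finset.range h, t j := Finset.prod_pos (fun j _ => tpos j)
  have hP : (∏ j ∈ Finset.range h, t j) ≤ Δmax * (1 + μ) ^ h := by
    calc (∏ j ∈ Finset.range h, t j) ≤ Δ h * ∏ j ∈ Finset.range h, t j :=
          le_mul_of_one_le_left hPpos.le hfin
      _ ≤ Δmax * (1 + μ) ^ h := key h le_rfl
  -- a priori bound h ≤ L / 6
  have hh6 : 6 * (h:ℝ) ≤ L := by
    have h128h : (128:ℝ) ^ h ≤ ∏ j ∈ Finset.range h, t j := by
      calc (128:ℝ) ^ h = ∏ _j ∈ Finset.range h, (128:ℝ) := by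
            rw [Finset.prod_const, Finset.card_range]
        _ ≤ ∏ j ∈ Finset.range h, t j :=
            Finset.prod_le_prod (fun j _ => by norm_num) (fun j _ => t128 j)
    have hub : Δmax * (1 + μ) ^ h ≤ 2 ^ L * 2 ^ ((1:ℝ) * h) := by
      apply mul_le_mul hΔub _ (by positivity) (by positivity)
      calc (1 + μ) ^ h ≤ (2:ℝ) ^ h := pow_le_pow_left₀ (by linarith) (by linarith) h
        _ = ((2:ℝ) ^ (1:ℝ)) ^ h := by rw [Real.rpow_one]
        _ = 2 ^ ((1:ℝ) * h) := two_rpow_pow 1 h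
    have hcomb : (2:ℝ) ^ ((7:ℝ) * h) ≤ 2 ^ (L + 1 * h) := by
      calc (2:ℝ) ^ ((7:ℝ) * h) = ((2:ℝ) ^ (7:ℝ)) ^ h := (two_rpow_pow 7 h).symm
        _ = (128:ℝ) ^ h := by rw [h2_7]
        _ ≤ ∏ j ∈ Finset.range h, t j := h128h
        _ ≤ Δmax * (1 + μ) ^ h := hP
        _ ≤ 2 ^ L * 2 ^ ((1:ℝ) * h) := hub
        _ = 2 ^ (L + 1 * h) := (Real.rpow_add (by norm_num) _ _).symm
    have := two_rpow_le_iff.mp hcomb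
    linarith
  -- bound (1+μ)^h ≤ 4
  have hexp4 : (1 + μ) ^ h ≤ 4 := by
    have hμh : μ * h ≤ 1 := by
      rw [hμdef, div_mul_eq_mul_div, div_le_one (by positivity)]
      nlinarith [Nat.cast_nonneg (α := ℝ) h]
    calc (1 + μ) ^ h ≤ (Real.exp μ) ^ h := by
          apply pow_le_pow_left₀ (by linarith)
          linarith [Real.add_one_le_exp μ]
      _ = Real.exp (μ * h) := by
          rw [← Real.exp_nat_mul]; ring_nf
      _ ≤ Real.exp 1 := Real.exp_le_exp.mpr hμh
      _ ≤ 4 := by linarith [Real.exp_one_lt_d9]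
  have hP4 : (∏ j ∈ Finset.range h, t j) ≤ 2 ^ (L + 2) := by
    have h2two : (2:ℝ) ^ (2:ℝ) = 4 := by
      rw [show (2:ℝ) = ((2:ℕ):ℝ) from by norm_num, Real.rpow_natCast]; norm_num
    calc (∏ j ∈ Finset.range h, t j) ≤ Δmax * (1 + μ) ^ h := hP
      _ ≤ 2 ^ L * 2 ^ (2:ℝ) := by
          rw [h2two]
          apply mul_le_mul hΔub hexp4 (by positivity) (by positivity)
      _ = 2 ^ (L + 2) := (Real.rpow_add (by norm_num) _ _).symm
  -- case split on whether all levels are in phase 1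
  by_cases hall : ∀ j < h, T1 * T' ^ j ≤ Δmax
  · -- all t j = T1
    have hPeq : (∏ j ∈ Finset.range h, t j) = T1 ^ h := by
      rw [Finset.prod_congr rfl (fun j hj => teq1 j (hall j (Finset.mem_range.mp hj))),
        Finset.prod_const, Finset.card_range]
    have hlow : (2:ℝ) ^ ((10 * s - 1) * h) ≤ 2 ^ (L + 2) := by
      calc (2:ℝ) ^ ((10 * s - 1) * h) = ((2:ℝ) ^ (10 * s - 1)) ^ h := (two_rpow_pow _ h).symm
        _ ≤ T1 ^ h := pow_le_pow_left₀ (by positivity) hT1lb h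
        _ = ∏ j ∈ Finset.range h, t j := hPeq.symm
        _ ≤ 2 ^ (L + 2) := hP4
    have hexp := two_rpow_le_iff.mp hlow
    rw [← hssq] at hexp
    by_contra hc
    push_neg at hc
    have hh0 : (0:ℝ) ≤ (h:ℝ) := Nat.cast_nonneg h
    nlinarith [mul_le_mul_of_nonneg_left hc.le (show (0:ℝ) ≤ 10 * s - 1 by linarith)]
  · -- there is a phase-2 level
    push_neg at hall
    obtain ⟨j0, hj0h, hj0⟩ := hall
    have hex : ∃ j, ¬ (T1 * T' ^ j ≤ Δmax) := ⟨j0, by linarith⟩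
    set k := Nat.find hex with hkdef
    have hkc : ¬ (T1 * T' ^ k ≤ Δmax) := Nat.find_spec hex
    have hkh : k < h := lt_of_le_of_lt (Nat.find_min' hex (by linarith)) hj0h
    have hbefore : ∀ j < k, T1 * T' ^ j ≤ Δmax := by
      intro j hj
      by_contra hcj
      exact absurd (Nat.find_min' hex hcj) (by omega)
    have hafter : ∀ j, k ≤ j → ¬ (T1 * T' ^ j ≤ Δmax) := by
      intro j hj hcj
      apply hkc
      calc T1 * T' ^ k ≤ T1 * T' ^ j := by
            apply mul_le_mul_of_nonneg_left (pow_le_pow_right₀ hT'_1 hj) (by linarith)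
        _ ≤ Δmax := hcj
    -- split the product
    have hsplit : (∏ j ∈ Finset.range h, t j) = T1 ^ k * T2 ^ (h - k) := by
      rw [Finset.range_eq_Ico, ← Finset.prod_Ico_consecutive _ (Nat.zero_le k) hkh.le]
      congr 1
      · rw [← Finset.range_eq_Ico,
          Finset.prod_congr rfl (fun j hj => teq1 j (hbefore j (Finset.mem_range.mp hj))),
          Finset.prod_const, Finset.card_range]
      · rw [Finset.prod_congr rfl (fun j hj => teq2 j (hafter j (Finset.mem_Ico.mp hj).1)),
          Finset.prod_const, Nat.card_Ico]
    have hcastsub : ((h - k : ℕ) : ℝ) = (h:ℝ) - (k:ℝ) := by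
      rw [Nat.cast_sub hkh.le]
    -- lower bound on the product
    have hlow : (2:ℝ) ^ ((10 * s - 1) * k + 7 * ((h:ℝ) - k)) ≤ ∏ j ∈ Finset.range h, t j := by
      rw [hsplit]
      rw [Real.rpow_add (by norm_num)]
      apply mul_le_mul
      · calc (2:ℝ) ^ ((10 * s - 1) * (k:ℝ)) = ((2:ℝ) ^ (10 * s - 1)) ^ k :=
              (two_rpow_pow _ k).symm
          _ ≤ T1 ^ k := pow_le_pow_left₀ (by positivity) hT1lb k
      · calc (2:ℝ) ^ ((7:ℝ) * ((h:ℝ) - k)) = (2:ℝ) ^ ((7:ℝ) * ((h - k : ℕ):ℝ)) := by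
              rw [hcastsub]
          _ = ((2:ℝ) ^ (7:ℝ)) ^ (h - k) := (two_rpow_pow _ _).symm
          _ = (128:ℝ) ^ (h - k) := by rw [h2_7]
          _ ≤ T2 ^ (h - k) := pow_le_pow_left₀ (by norm_num) hT2_128 _
      · positivity
      · positivity
    -- upper bound on the product using Δmax < T1 * T'^k
    have hΔsmall : Δmax ≤ (2:ℝ) ^ (10 * s + s * k) := by
      push_neg at hkc
      have : T1 * T' ^ k ≤ 2 ^ (10 * s) * 2 ^ (s * k) := by
        apply mul_le_mul hT1ub _ (by positivity) (by positivity)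
        calc T' ^ k ≤ ((2:ℝ) ^ s) ^ k := pow_le_pow_left₀ (by positivity) hT'ub k
          _ = 2 ^ (s * k) := two_rpow_pow s k
      calc Δmax ≤ T1 * T' ^ k := hkc.le
        _ ≤ 2 ^ (10 * s) * 2 ^ (s * k) := this
        _ = 2 ^ (10 * s + s * k) := (Real.rpow_add (by norm_num) _ _).symm
    have hup : (∏ j ∈ Finset.range h, t j) ≤ 2 ^ (10 * s + s * k + 2) := by
      have h2two : (2:ℝ) ^ (2:ℝ) = 4 := by
        rw [show (2:ℝ) = ((2:ℕ):ℝ) from by norm_num, Real.rpow_natCast]; norm_num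
      calc (∏ j ∈ Finset.range h, t j) ≤ Δmax * (1 + μ) ^ h := hP
        _ ≤ 2 ^ (10 * s + s * k) * 2 ^ (2:ℝ) := by
            rw [h2two]
            apply mul_le_mul hΔsmall hexp4 (by positivity) (by positivity)
        _ = 2 ^ (10 * s + s * k + 2) := (Real.rpow_add (by norm_num) _ _).symm
    have hexpineq : (10 * s - 1) * k + 7 * ((h:ℝ) - k) ≤ 10 * s + s * k + 2 :=
      two_rpow_le_iff.mp (le_trans hlow hup)
    have hk0 : (0:ℝ) ≤ (k:ℝ) := Nat.cast_nonneg k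
    have hsk : (k:ℝ) ≤ s * k := le_mul_of_one_le_left hk0 (by linarith)
    linarith
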